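/- arXiv:2410.24145 — 3 statements merged into one kernel-verified Lean document; each statement's English description precedes it below -/
import Mathlib

section
/- Let (R_1, …, R_n, R_{n+1}) be an exchangeable random vector of real-valued random variables that are almost surely pairwise distinct, and let k ∈ {1, …, n}. Let R_{(k)} denote the k-th order statistic of R_1, …, R_n. Then P(R_{n+1} ≤ R_{(k)}) = k/(n+1). -/
open MeasureTheory

/-- The `k`-th order statistic (0-indexed) of the tuple `f : Fin m → ℝ`. -/
noncomputable def orderStat {m : ℕ} (f : Fin m → ℝ) (k : Fin m) : ℝ :=
  f (Tuple.sort f k)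

/-- A random vector `R` is exchangeable if every permutation of its components
has the same joint distribution as the original. -/
def Exchangeable {Ω : Type*} [MeasurableSpace Ω] (P : Measure Ω) {m : ℕ}
    (R : Ω → Fin m → ℝ) : Prop :=
  ∀ π : Equiv.Perm (Fin m), Measure.map (fun ω => R ω ∘ π) P = Measure.map R P

/-- The number of components strictly below component `i`. -/
noncomputable def cnt {m : ℕ} (i : Fin m) (f : Fin m → ℝ) : ℕ :=
  ∑ j, if f j < f i then 1 else 0

lemma cnt_eq_card {m : ℕ} (i : Fin m) (f : Fin m → ℝ) :
    cnt i f = (Finset.univ.filter fun j => f j < f i).card := by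
  rw [cnt, Finset.card_filter]

lemma measurable_cnt {m : ℕ} (i : Fin m) :
    Measurable fun f : Fin m → ℝ => cnt i f := by
  unfold cnt
  refine Finset.measurable_sum _ fun j _ => ?_
  exact Measurable.ite (measurableSet_lt (measurable_pi_apply j) (measurable_pi_apply i))
    measurable_const measurable_const

lemma cnt_comp {m : ℕ} (f : Fin m → ℝ) (π : Equiv.Perm (Fin m)) (i : Fin m) :
    cnt i (f ∘ π) = cnt (π i) f := by
  unfold cnt
  exact Fintype.sum_equiv π _ _ fun j => rfl

lemma cnt_lt_cnt {m : ℕ} {f : Fin m → ℝ} {i j : Fin m} (h : f i < f j) :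
    cnt i f < cnt j f := by
  rw [cnt_eq_card, cnt_eq_card]
  apply Finset.card_lt_card
  rw [Finset.ssubset_def]
  constructor
  · intro x hx
    simp only [Finset.mem_filter, Finset.mem_univ, true_and] at *
    exact hx.trans h
  · intro hsub
    have := hsub (Finset.mem_filter.2 ⟨Finset.mem_univ i, h⟩)
    simp only [Finset.mem_filter, Finset.mem_univ, true_and] at this
    exact absurd this (lt_irrefl _)

lemma cnt_injective {m : ℕ} {f : Fin m → ℝ} (hf : Function.Injective f) :
    Function.Injective fun i => cnt i f := by
  intro i j h
  by_contra hne
  rcases (hf.ne hne).lt_or_gt with hl | hl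
  · exact absurd h (cnt_lt_cnt hl).ne
  · exact absurd h.symm (cnt_lt_cnt hl).ne

lemma cnt_lt {m : ℕ} (i : Fin m) (f : Fin m → ℝ) : cnt i f < m := by
  rw [cnt_eq_card]
  calc (Finset.univ.filter fun j => f j < f i).card
      ≤ (Finset.univ.erase i).card := by
        apply Finset.card_le_card
        intro x hx
        simp only [Finset.mem_filter, Finset.mem_univ, true_and] at hx
        exact Finset.mem_erase.2 ⟨fun h => absurd hx (h ▸ lt_irrefl _), Finset.mem_univ x⟩
    _ = m - 1 := by rw [Finset.card_erase_of_mem (Finset.mem_univ i)]; simp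
    _ < m := Nat.sub_lt i.pos Nat.one_pos

lemma cnt_surj {m : ℕ} {f : Fin m → ℝ} (hf : Function.Injective f) {r : ℕ} (hr : r < m) :
    ∃ i, cnt i f = r := by
  have hinj : Function.Injective fun i => (⟨cnt i f, cnt_lt i f⟩ : Fin m) := by
    intro i j h
    exact cnt_injective hf (congrArg Fin.val h)
  have hsurj := Finite.surjective_of_injective hinj
  obtain ⟨i, hi⟩ := hsurj ⟨r, hr⟩
  exact ⟨i, congrArg Fin.val hi⟩

lemma cnt_last_le_iff {n : ℕ} {f : Fin (n + 1) → ℝ} (hf : Function.Injective f) (k : Fin n) :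
    f (Fin.last n) ≤ orderStat (fun i : Fin n => f i.castSucc) k ↔ cnt (Fin.last n) f ≤ k := by
  set g : Fin n → ℝ := fun i => f i.castSucc with hg
  set σ := Tuple.sort g with hσ
  have hginj : Function.Injective g := fun a b h => Fin.castSucc_injective n (hf h)
  have hmono : StrictMono (g ∘ σ) :=
    (Tuple.monotone_sort g).strictMono_of_injective (hginj.comp σ.injective)
  set t := f (Fin.last n) with ht
  have h1 : cnt (Fin.last n) f = (Finset.univ.filter fun j : Fin n => g (σ j) < t).card := by
    rw [cnt, Fin.sum_univ_castSucc]
    simp only [lt_self_iff_false, ↓reduceIte, add_zero]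
    rw [Finset.card_filter]
    exact (Fintype.sum_equiv σ _ _ fun j => rfl).symm
  have horder : orderStat g k = g (σ k) := rfl
  rw [horder, h1]
  constructor
  · intro hle
    calc (Finset.univ.filter fun j : Fin n => g (σ j) < t).card
        ≤ (Finset.Iio k).card := by
          apply Finset.card_le_card
          intro j hj
          simp only [Finset.mem_filter, Finset.mem_univ, true_and] at hj
          exact Finset.mem_Iio.2 (hmono.lt_iff_lt.mp (hj.trans_le hle))
      _ = k := Fin.card_Iio k
  · intro hcard
    by_contra hnle
    push_neg at hnle
    have hsub : Finset.Iic k ⊆ Finset.univ.filter fun j : Fin n => g (σ j) < t := by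
      intro j hj
      refine Finset.mem_filter.2 ⟨Finset.mem_univ j, ?_⟩
      exact (hmono.monotone (Finset.mem_Iic.1 hj)).trans_lt hnle
    have := Finset.card_le_card hsub
    rw [Fin.card_Iic] at this
    omega

/-- For an exchangeable random vector `(R 0, …, R (n-1), R n)` with almost surely
pairwise distinct components, and `k : Fin n` (0-indexed; the 1-indexed rank is
`k + 1`), the probability that `R n` is at most the `(k+1)`-th order statistic of
the first `n` components equals `(k + 1)/(n + 1)`. -/
theorem prob_last_le_orderStat_eq {Ω : Type*} [MeasurableSpace Ω]
    (P : Measure Ω) [IsProbabilityMeasure P] (n : ℕ) (R : Ω → Fin (n + 1) → ℝ)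
    (hR : Measurable R) (hexch : Exchangeable P R)
    (hdist : ∀ᵐ ω ∂P, Function.Injective (R ω)) (k : Fin n) :
    P {ω | R ω (Fin.last n) ≤ orderStat (fun i : Fin n => R ω i.castSucc) k} =
      (((k : ℕ) + 1 : ℕ) : ENNReal) / ((n + 1 : ℕ) : ENNReal) := by
  classical
  have hRi : ∀ i, Measurable fun ω => R ω i := fun i => (measurable_pi_apply i).comp hR
  set A : ℕ → Set Ω := fun r => {ω | cnt (Fin.last n) (R ω) = r} with hA
  have hAmeas : ∀ r, MeasurableSet (A r) := fun r =>
    ((measurable_cnt (Fin.last n)).comp hR) (measurableSet_singleton r)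
  -- the injectivity set
  set S : Set Ω := {ω | Function.Injective (R ω)} with hSdef
  have hSmeas : MeasurableSet S := by
    have hSeq : S = ⋂ (i : Fin (n + 1)) (j : Fin (n + 1)) (_ : i ≠ j), {ω | R ω i = R ω j}ᶜ := by
      ext ω
      simp only [hSdef, Set.mem_setOf_eq, Set.mem_iInter, Set.mem_compl_iff]
      constructor
      · intro h i j hij he
        exact hij (h he)
      · intro h a b he
        by_contra hab
        exact h a b hab he
    rw [hSeq]
    exact MeasurableSet.iInter fun i => MeasurableSet.iInter fun j =>
      MeasurableSet.iInter fun _ => (measurableSet_eq_fun (hRi i) (hRi j)).compl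
  have hScompl : P Sᶜ = 0 := by
    have h := hdist
    rw [MeasureTheory.ae_iff] at h
    convert h using 2
    exact rfl
  -- exchangeability: probability of each rank value is independent of coordinate
  have hswap : ∀ i : Fin (n + 1), ∀ r : ℕ, P {ω | cnt i (R ω) = r} = P (A r) := by
    intro i r
    set π := Equiv.swap i (Fin.last n) with hπ
    have hπR : Measurable fun ω => R ω ∘ π := measurable_pi_iff.2 fun j => hRi (π j)
    have hset : MeasurableSet {f : Fin (n + 1) → ℝ | cnt (Fin.last n) f = r} :=
      measurable_cnt _ (measurableSet_singleton r)
    have hmap := congrArg (fun μ => μ {f : Fin (n + 1) → ℝ | cnt (Fin.last n) f = r}) (hexch π)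
    rw [Measure.map_apply hπR hset, Measure.map_apply hR hset] at hmap
    have hπlast : π (Fin.last n) = i := Equiv.swap_apply_right i (Fin.last n)
    have hpre : (fun ω => R ω ∘ π) ⁻¹' {f | cnt (Fin.last n) f = r}
        = {ω | cnt i (R ω) = r} := by
      ext ω
      simp only [Set.mem_preimage, Set.mem_setOf_eq, cnt_comp, hπlast]
    rw [hpre] at hmap
    exact hmap
  -- each rank value has probability 1/(n+1)
  have hval : ∀ r : ℕ, r < n + 1 → P (A r) = 1 / ((n + 1 : ℕ) : ENNReal) := by
    intro r hr
    have hdisj : Set.PairwiseDisjoint (↑(Finset.univ : Finset (Fin (n + 1))))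
        (fun i => {ω | cnt i (R ω) = r} ∩ S) := by
      intro i _ j _ hij
      refine Set.disjoint_left.2 fun ω hωi hωj => ?_
      exact hij (cnt_injective hωi.2 (hωi.1.trans hωj.1.symm))
    have hmeas : ∀ i ∈ (Finset.univ : Finset (Fin (n + 1))),
        MeasurableSet ({ω | cnt i (R ω) = r} ∩ S) := by
      intro i _
      exact MeasurableSet.inter (((measurable_cnt i).comp hR) (measurableSet_singleton r)) hSmeas
    have hunion : (⋃ i ∈ (Finset.univ : Finset (Fin (n + 1))),
        ({ω | cnt i (R ω) = r} ∩ S)) = S := by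
      ext ω
      simp only [Set.mem_iUnion, Finset.mem_univ, Set.mem_inter_iff, Set.mem_setOf_eq,
        exists_prop, true_and]
      constructor
      · rintro ⟨i, _, hω⟩; exact hω
      · intro hω
        obtain ⟨i, hi⟩ := cnt_surj hω hr
        exact ⟨i, hi, hω⟩
    have hsum := measure_biUnion_finset (μ := P) hdisj hmeas
    rw [hunion] at hsum
    have hSone : P S = 1 := by
      have := measure_add_measure_compl (μ := P) (s := S) ?hm
      · rw [hScompl, add_zero] at this; rw [this]; exact measure_univ
      · exact hSmeas
    have hterm : ∀ i : Fin (n + 1), P ({ω | cnt i (R ω) = r} ∩ S) = P (A r) := by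
      intro i
      rw [measure_inter_conull hScompl]
      exact hswap i r
    rw [hSone] at hsum
    simp only [hterm] at hsum
    rw [Finset.sum_const, Finset.card_univ, Fintype.card_fin, nsmul_eq_mul] at hsum
    rw [ENNReal.eq_div_iff (by simp : ((n + 1 : ℕ) : ENNReal) ≠ 0)
      (ENNReal.natCast_ne_top _)]
    exact_mod_cast hsum.symm
  -- the target event equals the event that the rank of the last component is ≤ k
  have hTU : P {ω | R ω (Fin.last n) ≤ orderStat (fun i : Fin n => R ω i.castSucc) k}
      = P {ω | cnt (Fin.last n) (R ω) ≤ (k : ℕ)} := by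
    apply measure_congr
    rw [Filter.eventuallyEq_set]
    filter_upwards [hdist] with ω hω
    exact cnt_last_le_iff hω k
  rw [hTU]
  have hU : {ω | cnt (Fin.last n) (R ω) ≤ (k : ℕ)}
      = ⋃ r ∈ Finset.range ((k : ℕ) + 1), A r := by
    ext ω
    simp only [Set.mem_setOf_eq, Set.mem_iUnion, Finset.mem_range, exists_prop, hA,
      Nat.lt_succ_iff]
    constructor
    · intro h; exact ⟨cnt (Fin.last n) (R ω), h, rfl⟩
    · rintro ⟨r, hr, h⟩; omega
  rw [hU]
  have hdisj2 : Set.PairwiseDisjoint (↑(Finset.range ((k : ℕ) + 1))) A := by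
    intro r _ s _ hrs
    refine Set.disjoint_left.2 fun ω hωr hωs => ?_
    exact hrs (hωr.symm.trans hωs)
  rw [measure_biUnion_finset hdisj2 fun r _ => hAmeas r]
  have : ∀ r ∈ Finset.range ((k : ℕ) + 1), P (A r) = 1 / ((n + 1 : ℕ) : ENNReal) := by
    intro r hr
    have hk := k.isLt
    have hr' := Finset.mem_range.1 hr
    exact hval r (by omega)
  rw [Finset.sum_congr rfl this, Finset.sum_const, Finset.card_range, nsmul_eq_mul]
  rw [mul_one_div]
end

section
/- Let ((X_1, Y_1), …, (X_{n+1}, Y_{n+1})) be an exchangeable sequence of random pairs with X_i taking values in ℝ^d and Y_i taking values in [0, 2π). Let μ̂ : ℝ^d → [0, 2π) and σ̂ : ℝ^d → (0, π] be fixed measurable functions, and define the conformity scores R_i = (π - |π - |Y_i - μ̂(X_i)||)/σ̂(X_i) for i = 1, …, n+1. Let 0 < α < 1 be such that ⌈(1-α)(n+1)⌉ ≤ n, and let r̂ denote the ⌈(1-α)(n+1)⌉-th order statistic of R_1, …, R_n. For x ∈ ℝ^d define the prediction set C(x) = {y ∈ [-π, 3π] : μ̂(x) - r̂·σ̂(x)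 ≤ y ≤ μ̂(x) + r̂·σ̂(x)} if r̂·σ̂(x) < π, and C(x) = [0, 2π) otherwise. Then P(there exists ℓ ∈ ℤ such that Y_{n+1} + 2ℓπ ∈ C(X_{n+1})) ≥ 1 - α. -/
open MeasureTheory Real

/-- The circular conformal prediction set for a point prediction `μx`, variability
estimate `σx`, and calibrated conformity quantile `r`: if `r * σx < π` it is the arc
`[μx - r σx, μx + r σx]` reported inside `[-π, 3π]`, otherwise the whole circle `[0, 2π)`. -/
noncomputable def predSet (μx σx r : ℝ) : Set ℝ :=
  if r * σx < π then
    Set.Icc (-π) (3 * π) ∩ Set.Icc (μx - r * σx) (μx + r * σx)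
  else Set.Ico 0 (2 * π)

open Finset
lemma card_lt_sort {m : ℕ} (r : Fin m → ℝ) (b : Fin m) :
    (univ.filter fun i => r i < r (Tuple.sort r b)).card ≤ (b : ℕ) := by
  classical
  have hmono : Monotone (r ∘ Tuple.sort r) := Tuple.monotone_sort r
  calc (univ.filter fun i => r i < r (Tuple.sort r b)).card
      ≤ (Finset.Iio b).card := by
        apply Finset.card_le_card_of_injOn (fun i => (Tuple.sort r).symm i)
        · intro i hi
          simp only [Finset.mem_coe, mem_filter, mem_univ, true_and] at hi
          simp only [Finset.mem_coe, Finset.mem_Iio]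
          by_contra hle
          push_neg at hle
          have h2 := hmono hle
          simp only [Function.comp_apply, Equiv.apply_symm_apply] at h2
          exact absurd (lt_of_lt_of_le hi h2) (lt_irrefl _)
        · exact fun a _ c _ h => (Tuple.sort r).symm.injective h
    _ = (b : ℕ) := Fin.card_Iio b

lemma pigeon {m : ℕ} (r : Fin m → ℝ) (k : ℕ) (hk : k < m) :
    k + 1 ≤ ((univ : Finset (Fin m)).filter fun j =>
      (univ.filter fun i => r i < r j).card ≤ k).card := by
  classical
  have hsub : (Finset.Iic (⟨k, hk⟩ : Fin m)).image (Tuple.sort r) ⊆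
      (univ : Finset (Fin m)).filter fun j =>
        (univ.filter fun i => r i < r j).card ≤ k := by
    intro j hj
    simp only [Finset.mem_image, Finset.mem_Iic] at hj
    obtain ⟨b, hb, rfl⟩ := hj
    simp only [mem_filter, mem_univ, true_and]
    exact le_trans (card_lt_sort r b) (by exact_mod_cast hb)
  have := Finset.card_le_card hsub
  rwa [Finset.card_image_of_injective _ (Equiv.injective _), Fin.card_Iic] at this

lemma le_orderStat {m : ℕ} (f : Fin m → ℝ) (rr : ℝ) (k : Fin m)
    (h : (univ.filter fun i => f i < rr).card ≤ (k : ℕ)) : rr ≤ orderStat f k := by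
  classical
  by_contra hlt
  push_neg at hlt
  have hmono : Monotone (f ∘ Tuple.sort f) := Tuple.monotone_sort f
  have hsub : (Finset.Iic k).image (Tuple.sort f) ⊆ univ.filter fun i => f i < rr := by
    intro j hj
    simp only [Finset.mem_image, Finset.mem_Iic] at hj
    obtain ⟨b, hb, rfl⟩ := hj
    simp only [mem_filter, mem_univ, true_and]
    exact lt_of_le_of_lt (hmono hb) hlt
  have h2 := Finset.card_le_card hsub
  rw [Finset.card_image_of_injective _ (Equiv.injective _), Fin.card_Iic] at h2
  omega

lemma geom (μ σ y r : ℝ) (hμ : μ ∈ Set.Ico 0 (2 * π)) (hσ : σ ∈ Set.Ioc 0 π)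
    (hy : y ∈ Set.Ico 0 (2 * π)) (hd : π - abs (π - abs (y - μ)) ≤ r * σ) :
    ∃ ℓ : ℤ, y + 2 * ℓ * π ∈ predSet μ σ r := by
  have hπ := Real.pi_pos
  obtain ⟨hμ0, hμ2⟩ := hμ
  obtain ⟨hy0, hy2⟩ := hy
  by_cases hc : r * σ < π
  · rcases le_or_gt |y - μ| π with hD | hD
    · refine ⟨0, ?_⟩
      rw [predSet, if_pos hc]
      have h1 : abs (π - abs (y - μ)) = π - |y - μ| := abs_of_nonneg (by linarith)
      rw [h1] at hd
      have h2 : |y - μ| ≤ r * σ := by linarith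
      obtain ⟨ha, hb⟩ := abs_le.mp h2
      push_cast
      constructor <;> constructor <;> linarith
    · have h1 : abs (π - abs (y - μ)) = |y - μ| - π := by
        rw [abs_of_nonpos (by linarith)]; ring
      rw [h1] at hd
      rw [predSet, if_pos hc]
      rcases le_or_gt (y - μ) 0 with hs | hs
      · -- μ - y > π, take ℓ = 1
        have habs : |y - μ| = μ - y := by rw [abs_of_nonpos hs]; ring
        rw [habs] at hd hD
        refine ⟨1, ?_⟩
        push_cast
        constructor <;> constructor <;> linarith
      · -- y - μ > π, take ℓ = -1
        have habs : |y - μ| = y - μ := abs_of_pos hs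
        rw [habs] at hd hD
        refine ⟨-1, ?_⟩
        push_cast
        constructor <;> constructor <;> linarith
  · refine ⟨0, ?_⟩
    rw [predSet, if_neg hc]
    push_cast
    simpa using ⟨hy0, hy2⟩


/-- Split conformal prediction for circular responses, lower coverage bound:
for exchangeable pairs `(X i, Y i)`, circular conformity scores
`R i = (π - |π - |Y i - μ̂(X i)||)/σ̂(X i)`, and `r̂` the `⌈(1-α)(n+1)⌉`-th order
statistic of the first `n` scores (witnessed by `k : Fin n`, 0-indexed), the
probability that some periodic translate of `Y (n+1)` lies in the prediction set
is at least `1 - α`. -/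
theorem circular_split_conformal_lower {Ω : Type*} [MeasurableSpace Ω]
    (P : Measure Ω) [IsProbabilityMeasure P] (n d : ℕ)
    (X : Ω → Fin (n + 1) → (Fin d → ℝ)) (Y : Ω → Fin (n + 1) → ℝ)
    (hX : Measurable X) (hY : Measurable Y)
    (hexch : ∀ π' : Equiv.Perm (Fin (n + 1)),
      Measure.map (fun ω => fun i => (X ω (π' i), Y ω (π' i))) P =
        Measure.map (fun ω => fun i => (X ω i, Y ω i)) P)
    (hYrange : ∀ ω i, Y ω i ∈ Set.Ico 0 (2 * π))
    (μhat σhat : (Fin d → ℝ) → ℝ) (hμmeas : Measurable μhat) (hσmeas : Measurable σhat)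
    (hμrange : ∀ x, μhat x ∈ Set.Ico 0 (2 * π))
    (hσrange : ∀ x, σhat x ∈ Set.Ioc 0 π)
    (R : Ω → Fin (n + 1) → ℝ)
    (hRdef : ∀ ω i, R ω i = (π - abs (π - |Y ω i - μhat (X ω i)|)) / σhat (X ω i))
    (α : ℝ) (hα0 : 0 < α) (hα1 : α < 1)
    (k : Fin n) (hk : ((k : ℕ) : ℤ) + 1 = ⌈(1 - α) * ((n : ℝ) + 1)⌉) :
    ENNReal.ofReal (1 - α) ≤
      P {ω | ∃ ℓ : ℤ, Y ω (Fin.last n) + 2 * ℓ * π ∈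
        predSet (μhat (X ω (Fin.last n))) (σhat (X ω (Fin.last n)))
          (orderStat (fun i : Fin n => R ω i.castSucc) k)} := by
  classical
  set ρ : ((Fin d → ℝ) × ℝ) → ℝ :=
    fun p => (π - abs (π - abs (p.2 - μhat p.1))) / σhat p.1 with hρdef
  have hρmeas : Measurable ρ := by
    apply Measurable.div
    · exact measurable_const.sub
        ((measurable_const.sub ((measurable_snd.sub (hμmeas.comp measurable_fst)).abs)).abs)
    · exact hσmeas.comp measurable_fst
  set T : Ω → Fin (n + 1) → ((Fin d → ℝ) × ℝ) := fun ω i => (X ω i, Y ω i) with hTdef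
  have hTmeas : Measurable T := measurable_pi_lambda _ fun i =>
    ((measurable_pi_apply i).comp hX).prodMk ((measurable_pi_apply i).comp hY)
  have hRρ : ∀ ω i, R ω i = ρ (T ω i) := fun ω i => hRdef ω i
  set B : Fin (n + 1) → Set (Fin (n + 1) → ((Fin d → ℝ) × ℝ)) :=
    fun j => {v | ((univ : Finset (Fin (n+1))).filter
      fun i => ρ (v i) < ρ (v j)).card ≤ (k : ℕ)} with hBdef
  have hBmeas : ∀ j, MeasurableSet (B j) := by
    intro j
    have hcard : Measurable fun v : Fin (n+1) → ((Fin d → ℝ) × ℝ) =>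
        ((univ.filter fun i => ρ (v i) < ρ (v j)).card : ℕ) := by
      simp only [Finset.card_filter]
      apply Finset.measurable_sum
      intro i _
      have hs : MeasurableSet {v : Fin (n+1) → ((Fin d → ℝ) × ℝ) | ρ (v i) < ρ (v j)} :=
        measurableSet_lt (hρmeas.comp (measurable_pi_apply i))
          (hρmeas.comp (measurable_pi_apply j))
      exact Measurable.ite hs measurable_const measurable_const
    exact hcard measurableSet_Iic
  -- equal probabilities
  have hEeq : ∀ j, P (T ⁻¹' (B j)) = P (T ⁻¹' (B (Fin.last n))) := by
    intro j
    set s := Equiv.swap j (Fin.last n) with hs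
    have h1 := hexch s
    have hset : T ⁻¹' (B j) = (fun ω => (T ω) ∘ s) ⁻¹' (B (Fin.last n)) := by
      ext ω
      simp only [Set.mem_preimage, hBdef, Set.mem_setOf_eq, Function.comp_apply]
      have hlast : s (Fin.last n) = j := Equiv.swap_apply_right _ _
      simp only [hlast]
      constructor <;> intro h <;> refine le_trans (le_of_eq ?_) h
      · apply Finset.card_bij (fun i _ => s i)
        · intro i hi
          simp only [mem_filter, mem_univ, true_and] at hi ⊢
          simpa [Equiv.symm_apply_apply] using hi
        · intro a _ b _ hab; exact s.injective hab
        · intro b hb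
          simp only [mem_filter, mem_univ, true_and] at hb
          exact ⟨s.symm b, by simp [mem_filter, Equiv.apply_symm_apply, hb], by simp⟩
      · apply Finset.card_bij (fun i _ => s.symm i)
        · intro i hi
          simp only [mem_filter, mem_univ, true_and] at hi ⊢
          simpa [Equiv.apply_symm_apply] using hi
        · intro a _ b _ hab; exact s.symm.injective hab
        · intro b hb
          simp only [mem_filter, mem_univ, true_and] at hb
          exact ⟨s b, by simp [mem_filter, Equiv.symm_apply_apply, hb], by simp⟩
    have hms : Measurable fun ω => (T ω) ∘ s :=
      measurable_pi_lambda _ fun i => (measurable_pi_apply (s i)).comp hTmeas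
    calc P (T ⁻¹' (B j)) = P ((fun ω => (T ω) ∘ s) ⁻¹' (B (Fin.last n))) := by rw [hset]
      _ = Measure.map (fun ω => (T ω) ∘ s) P (B (Fin.last n)) :=
          (Measure.map_apply hms (hBmeas _)).symm
      _ = Measure.map T P (B (Fin.last n)) := by
          have : (fun ω => (T ω) ∘ s) = fun ω => fun i => (X ω (s i), Y ω (s i)) := rfl
          rw [this, h1]
      _ = P (T ⁻¹' (B (Fin.last n))) := Measure.map_apply hTmeas (hBmeas _)
  -- key inequality
  have key : (((k : ℕ) : ENNReal) + 1) ≤ (n + 1) * P (T ⁻¹' (B (Fin.last n))) := by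
    have hsum : ∀ ω, (((k : ℕ) : ENNReal) + 1) ≤
        ∑ j : Fin (n + 1), (B j).indicator (fun _ => (1 : ENNReal)) (T ω) := by
      intro ω
      have hpg := pigeon (fun i => ρ (T ω i)) (k : ℕ) (lt_of_lt_of_le k.2 (Nat.le_succ n))
      have heq : ∑ j : Fin (n + 1), (B j).indicator (fun _ => (1 : ENNReal)) (T ω) =
          (((univ : Finset (Fin (n+1))).filter fun j =>
            (univ.filter fun i => ρ (T ω i) < ρ (T ω j)).card ≤ (k : ℕ)).card : ENNReal) := by
        rw [Finset.card_filter]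
        push_cast
        refine Finset.sum_congr rfl fun j _ => ?_
        by_cases hj : T ω ∈ B j
        · rw [Set.indicator_of_mem hj]
          simp only [hBdef, Set.mem_setOf_eq] at hj
          rw [if_pos hj]
        · rw [Set.indicator_of_notMem hj]
          simp only [hBdef, Set.mem_setOf_eq] at hj
          rw [if_neg hj]
      rw [heq]
      exact_mod_cast hpg
    calc (((k : ℕ) : ENNReal) + 1)
        = ∫⁻ _, (((k : ℕ) : ENNReal) + 1) ∂P := by simp
      _ ≤ ∫⁻ ω, ∑ j : Fin (n + 1), (B j).indicator (fun _ => (1 : ENNReal)) (T ω) ∂P :=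
          lintegral_mono hsum
      _ = ∑ j : Fin (n + 1), ∫⁻ ω, (B j).indicator (fun _ => (1 : ENNReal)) (T ω) ∂P :=
          lintegral_finset_sum _ fun j _ =>
            ((measurable_const.indicator (hBmeas j)).comp hTmeas)
      _ = ∑ j : Fin (n + 1), P (T ⁻¹' (B j)) := by
          refine Finset.sum_congr rfl fun j _ => ?_
          rw [← lintegral_indicator_one (hTmeas (hBmeas j))]
          refine lintegral_congr fun ω => ?_
          by_cases h : T ω ∈ B j <;>
            simp [Set.indicator_apply, h, Set.mem_preimage]
      _ = ∑ _j : Fin (n + 1), P (T ⁻¹' (B (Fin.last n))) := by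
          exact Finset.sum_congr rfl fun j _ => hEeq j
      _ = (n + 1) * P (T ⁻¹' (B (Fin.last n))) := by
          rw [Finset.sum_const, Finset.card_univ, Fintype.card_fin, nsmul_eq_mul]
          push_cast
          ring
  -- inclusion in the target event
  have hincl : T ⁻¹' (B (Fin.last n)) ⊆ {ω | ∃ ℓ : ℤ, Y ω (Fin.last n) + 2 * ℓ * π ∈
        predSet (μhat (X ω (Fin.last n))) (σhat (X ω (Fin.last n)))
          (orderStat (fun i : Fin n => R ω i.castSucc) k)} := by
    intro ω hω
    simp only [Set.mem_preimage, hBdef, Set.mem_setOf_eq] at hω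
    have h1 : ((univ : Finset (Fin n)).filter
        fun i => R ω i.castSucc < R ω (Fin.last n)).card ≤ (k : ℕ) := by
      refine le_trans (Finset.card_le_card_of_injOn Fin.castSucc ?_ ?_) hω
      · intro i hi
        simp only [Finset.mem_coe, mem_filter, mem_univ, true_and] at hi ⊢
        simp only [← hRρ]
        exact hi
      · exact fun a _ b _ h => Fin.castSucc_injective n h
    have h2 : R ω (Fin.last n) ≤ orderStat (fun i : Fin n => R ω i.castSucc) k :=
      le_orderStat _ _ _ h1
    set x := X ω (Fin.last n)
    have hσx := hσrange x
    have hd : π - abs (π - abs (Y ω (Fin.last n) - μhat x)) ≤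
        orderStat (fun i : Fin n => R ω i.castSucc) k * σhat x := by
      rw [hRdef ω (Fin.last n)] at h2
      exact (div_le_iff₀ hσx.1).mp h2
    exact geom (μhat x) (σhat x) (Y ω (Fin.last n)) _ (hμrange x) hσx (hYrange ω _) hd
  -- conclude
  have hmono := measure_mono (μ := P) hincl
  have hfin : (((k : ℕ) : ENNReal) + 1) / (n + 1) ≤
      P {ω | ∃ ℓ : ℤ, Y ω (Fin.last n) + 2 * ℓ * π ∈
        predSet (μhat (X ω (Fin.last n))) (σhat (X ω (Fin.last n)))
          (orderStat (fun i : Fin n => R ω i.castSucc) k)} :=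
    ENNReal.div_le_of_le_mul' (le_trans key (mul_le_mul_right hmono _))
  refine le_trans ?_ hfin
  -- ofReal (1 - α) ≤ (k + 1) / (n + 1)
  have hreal : (1 - α) * ((n : ℝ) + 1) ≤ ((k : ℕ) : ℝ) + 1 := by
    have hceil := Int.le_ceil ((1 - α) * ((n : ℝ) + 1))
    rw [← hk] at hceil
    push_cast at hceil
    linarith
  have hn1 : ((n : ENNReal) + 1) ≠ 0 := by simp
  have hn2 : ((n : ENNReal) + 1) ≠ ⊤ := by
    simp [ENNReal.natCast_ne_top]
  rw [ENNReal.le_div_iff_mul_le (Or.inl hn1) (Or.inl hn2)]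
  have : ENNReal.ofReal (1 - α) * ((n : ENNReal) + 1) =
      ENNReal.ofReal ((1 - α) * ((n : ℝ) + 1)) := by
    rw [ENNReal.ofReal_mul (by linarith)]
    congr 1
    rw [ENNReal.ofReal_add (by positivity) zero_le_one]
    simp [ENNReal.ofReal_natCast]
  rw [this]
  calc ENNReal.ofReal ((1 - α) * ((n : ℝ) + 1)) ≤ ENNReal.ofReal (((k : ℕ) : ℝ) + 1) :=
        ENNReal.ofReal_le_ofReal hreal
    _ = ((k : ℕ) : ENNReal) + 1 := by
        rw [ENNReal.ofReal_add (by positivity) zero_le_one]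
        simp [ENNReal.ofReal_natCast]
end

section
/- Let ((X_1, Y_1), …, (X_{n+1}, Y_{n+1})) be an exchangeable sequence of random pairs with X_i taking values in ℝ^d and Y_i taking values in [0, 2π). Let μ̂ : ℝ^d → [0, 2π) and σ̂ : ℝ^d → (0, π] be fixed measurable functions, and define the conformity scores R_i = (π - |π - |Y_i - μ̂(X_i)||)/σ̂(X_i) for i = 1, …, n+1, assumed to be almost surely pairwise distinct. Let 0 < α < 1 be such that ⌈(1-α)(n+1)⌉ ≤ n, and let r̂ denote the ⌈(1-α)(n+1)⌉-th order statistic of R_1, …, R_n. For x ∈ ℝ^d define the prediction set C(x) = {y ∈ [-π, 3π] : μ̂(x) - r̂·σ̂(x) ≤ y ≤ μ̂(x) + r̂·σ̂(x)} if r̂·σ̂(x) < π, and C(x) = [0, 2π) otherwise. Then 1 - α ≤ P(there exists ℓ ∈ ℤ such that Y_{n+1} + 2ℓπ ∈ C(X_{n+1})) < 1 - α + 1/(n+1). -/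
open MeasureTheory Real Finset
open scoped ENNReal

lemma card_filter_comp_equiv {m : ℕ} (e : Equiv.Perm (Fin m)) (p : Fin m → Prop)
    [DecidablePred p] :
    (univ.filter fun i => p (e i)).card = (univ.filter p).card :=
  Finset.card_bij' (fun a _ => e a) (fun b _ => e.symm b) (by simp) (by simp) (by simp) (by simp)

lemma sort_strictMono {m : ℕ} (f : Fin m → ℝ) (hf : Function.Injective f) :
    StrictMono (f ∘ Tuple.sort f) :=
  (Tuple.monotone_sort f).strictMono_of_injective (hf.comp (Tuple.sort f).injective)

lemma le_orderStat_iff {m : ℕ} (f : Fin m → ℝ) (hf : Function.Injective f) (c : ℝ) (k : Fin m) :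
    c ≤ orderStat f k ↔ (univ.filter fun i => f i < c).card ≤ (k : ℕ) := by
  have hs := sort_strictMono f hf
  set σ := Tuple.sort f
  constructor
  · intro h
    calc (univ.filter fun i => f i < c).card
        ≤ (Finset.Iio k).card := by
          apply Finset.card_le_card_of_injOn (fun i => σ.symm i)
          · intro i hi
            simp only [Finset.mem_coe, mem_filter, mem_univ, true_and] at hi
            simp only [Finset.mem_coe, Finset.mem_Iio]
            have : (f ∘ σ) (σ.symm i) < (f ∘ σ) k := by
              simpa [orderStat] using lt_of_lt_of_le hi h
            exact hs.lt_iff_lt.mp this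
          · exact fun a _ b _ hab => σ.symm.injective hab
      _ = (k : ℕ) := Fin.card_Iio k
  · intro h
    by_contra hc
    push_neg at hc
    have hsub : (Finset.Iic k).image σ ⊆ univ.filter fun i => f i < c := by
      intro j hj
      simp only [Finset.mem_image, Finset.mem_Iic] at hj
      obtain ⟨a, ha, rfl⟩ := hj
      simp only [mem_filter, mem_univ, true_and]
      exact lt_of_le_of_lt (hs.monotone ha) hc
    have := Finset.card_le_card hsub
    rw [Finset.card_image_of_injective _ σ.injective, Fin.card_Iic] at this
    omega

lemma card_val_lt {m M : ℕ} (hM : M ≤ m) :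
    (univ.filter fun a : Fin m => (a : ℕ) < M).card = M := by
  rw [show (univ.filter fun a : Fin m => (a : ℕ) < M) = univ.map (Fin.castLEEmb hM) by
    ext a
    simp only [mem_filter, mem_univ, true_and, Finset.mem_map, Fin.castLEEmb, Fin.castLE,
      Function.Embedding.coeFn_mk]
    constructor
    · intro h; exact ⟨⟨a, h⟩, by simp⟩
    · rintro ⟨b, rfl⟩; exact b.2]
  simp

lemma rank_eq {m : ℕ} (g : Fin m → ℝ) (hg : Function.Injective g) (j : Fin m) :
    (univ.filter fun i => g i ≤ g j).card = ((Tuple.sort g).symm j : ℕ) + 1 := by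
  have hτ := sort_strictMono g hg
  set τ := Tuple.sort g with hτdef
  rw [← card_filter_comp_equiv τ (fun i => g i ≤ g j)]
  have heq : (univ.filter fun a => g (τ a) ≤ g j) = Finset.Iic (τ.symm j) := by
    ext a
    simp only [mem_filter, mem_univ, true_and, Finset.mem_Iic]
    have : g j = (g ∘ τ) (τ.symm j) := by simp
    rw [this]
    exact hτ.le_iff_le
  rw [heq, Fin.card_Iic]

lemma rank_count {m : ℕ} (g : Fin m → ℝ) (hg : Function.Injective g) (M : ℕ) (hM : M ≤ m) :
    (univ.filter fun j => (univ.filter fun i => g i ≤ g j).card ≤ M).card = M := by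
  have h1 : ∀ j, ((univ.filter fun i => g i ≤ g j).card ≤ M) ↔
      ((Tuple.sort g).symm j : ℕ) + 1 ≤ M := by
    intro j; rw [rank_eq g hg j]
  simp_rw [h1]
  rw [← card_filter_comp_equiv (Tuple.sort g) (fun j => ((Tuple.sort g).symm j : ℕ) + 1 ≤ M)]
  simp only [Equiv.symm_apply_apply]
  have : (univ.filter fun a : Fin m => (a : ℕ) + 1 ≤ M) =
      univ.filter fun a : Fin m => (a : ℕ) < M := by
    ext a; simp [Nat.succ_le_iff]
  rw [this, card_val_lt hM]

lemma mem_pred_iff (μ σ y r : ℝ) (hμ : μ ∈ Set.Ico 0 (2 * π)) (hσ : σ ∈ Set.Ioc 0 π)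
    (hy : y ∈ Set.Ico 0 (2 * π)) :
    (∃ ℓ : ℤ, y + 2 * ℓ * π ∈ predSet μ σ r) ↔ (π - abs (π - |y - μ|)) / σ ≤ r := by
  obtain ⟨hμ0, hμ2⟩ := hμ
  obtain ⟨hσ0, hσπ⟩ := hσ
  obtain ⟨hy0, hy2⟩ := hy
  have hπ := pi_pos
  set t := y - μ with ht
  set dd := π - abs (π - |t|) with hdd
  have htabs : |t| < 2 * π := abs_lt.mpr ⟨by linarith, by linarith⟩
  have habs1 : dd ≤ |t| := by
    have := le_abs_self (π - |t|); linarith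
  have habs2 : dd ≤ 2 * π - |t| := by
    have := neg_abs_le (π - |t|); linarith
  have hdd0 : 0 ≤ dd := by
    have : abs (π - |t|) ≤ π := abs_le.mpr ⟨by linarith, by linarith [abs_nonneg t]⟩
    linarith
  by_cases hcase : r * σ < π
  · simp only [predSet, if_pos hcase]
    constructor
    · rintro ⟨ℓ, -, h2⟩
      rw [Set.mem_Icc] at h2
      have habsle : |t + 2 * ℓ * π| ≤ r * σ := abs_le.mpr ⟨by linarith [h2.1], by linarith [h2.2]⟩
      have hkey : dd ≤ |t + 2 * ℓ * π| := by
        rcases eq_or_ne ℓ 0 with rfl | hℓ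
        · simpa using habs1
        · have h1 : (1 : ℝ) ≤ |(ℓ : ℝ)| := by exact_mod_cast Int.one_le_abs hℓ
          have h2' : |(t + 2 * ℓ * π) - t| ≤ |t + 2 * ℓ * π| + |t| := abs_sub _ _
          have h3 : |(t + 2 * ℓ * π) - t| = 2 * |(ℓ : ℝ)| * π := by
            rw [show (t + 2 * (ℓ : ℝ) * π) - t = 2 * ℓ * π by ring, abs_mul, abs_mul, abs_two,
              abs_of_pos hπ]
          nlinarith
      rw [div_le_iff₀ hσ0]; linarith
    · intro hle
      have hdrs : dd ≤ r * σ := (div_le_iff₀ hσ0).mp hle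
      rcases le_or_gt |t| π with hc1 | hc2
      · have hddt : dd = |t| := by
          rw [hdd, abs_of_nonneg (by linarith : (0:ℝ) ≤ π - |t|)]; ring
        obtain ⟨hl, hr⟩ := abs_le.mp (hddt ▸ hdrs : |t| ≤ r * σ)
        refine ⟨0, ?_, ?_⟩ <;> push_cast <;> rw [Set.mem_Icc] <;>
          constructor <;> linarith
      · rcases le_or_gt t 0 with htn | htp
        · have h1 : |t| = -t := abs_of_nonpos htn
          have htlt : t < -π := by rw [h1] at hc2; linarith
          have hddt : dd = 2 * π + t := by
            rw [hdd, h1, abs_of_neg (by linarith : π - -t < 0)]; ring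
          refine ⟨1, ?_, ?_⟩ <;> push_cast <;> rw [Set.mem_Icc] <;>
            constructor <;> nlinarith
        · have h1 : |t| = t := abs_of_pos htp
          have htgt : π < t := by rw [h1] at hc2; exact hc2
          have hddt : dd = 2 * π - t := by
            rw [hdd, h1, abs_of_neg (by linarith : π - t < 0)]; ring
          refine ⟨-1, ?_, ?_⟩ <;> push_cast <;> rw [Set.mem_Icc] <;>
            constructor <;> nlinarith
  · simp only [predSet, if_neg hcase]
    push_neg at hcase
    constructor
    · intro _
      rw [div_le_iff₀ hσ0]
      have : abs (π - |t|) ≥ 0 := abs_nonneg _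
      linarith
    · intro _
      exact ⟨0, by push_cast; rw [Set.mem_Ico]; constructor <;> linarith⟩

/-- Split conformal prediction for circular responses, two-sided coverage bound:
for exchangeable pairs `(X i, Y i)`, circular conformity scores
`R i = (π - |π - |Y i - μ̂(X i)||)/σ̂(X i)` that are almost surely pairwise
distinct, and `r̂` the `⌈(1-α)(n+1)⌉`-th order statistic of the first `n` scores
(witnessed by `k : Fin n`, 0-indexed), the probability that some periodic
translate of `Y (n+1)` lies in the prediction set is at least `1 - α` and
strictly less than `1 - α + 1/(n+1)`. -/
theorem circular_split_conformal_two_sided {Ω : Type*} [MeasurableSpace Ω]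
    (P : Measure Ω) [IsProbabilityMeasure P] (n d : ℕ)
    (X : Ω → Fin (n + 1) → (Fin d → ℝ)) (Y : Ω → Fin (n + 1) → ℝ)
    (hX : Measurable X) (hY : Measurable Y)
    (hexch : ∀ π' : Equiv.Perm (Fin (n + 1)),
      Measure.map (fun ω => fun i => (X ω (π' i), Y ω (π' i))) P =
        Measure.map (fun ω => fun i => (X ω i, Y ω i)) P)
    (hYrange : ∀ ω i, Y ω i ∈ Set.Ico 0 (2 * π))
    (μhat σhat : (Fin d → ℝ) → ℝ) (hμmeas : Measurable μhat) (hσmeas : Measurable σhat)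
    (hμrange : ∀ x, μhat x ∈ Set.Ico 0 (2 * π))
    (hσrange : ∀ x, σhat x ∈ Set.Ioc 0 π)
    (R : Ω → Fin (n + 1) → ℝ)
    (hRdef : ∀ ω i, R ω i = (π - abs (π - |Y ω i - μhat (X ω i)|)) / σhat (X ω i))
    (hdist : ∀ᵐ ω ∂P, Function.Injective (R ω))
    (α : ℝ) (hα0 : 0 < α) (hα1 : α < 1)
    (k : Fin n) (hk : ((k : ℕ) : ℤ) + 1 = ⌈(1 - α) * ((n : ℝ) + 1)⌉) :
    ENNReal.ofReal (1 - α) ≤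
      P {ω | ∃ ℓ : ℤ, Y ω (Fin.last n) + 2 * ℓ * π ∈
        predSet (μhat (X ω (Fin.last n))) (σhat (X ω (Fin.last n)))
          (orderStat (fun i : Fin n => R ω i.castSucc) k)} ∧
    P {ω | ∃ ℓ : ℤ, Y ω (Fin.last n) + 2 * ℓ * π ∈
        predSet (μhat (X ω (Fin.last n))) (σhat (X ω (Fin.last n)))
          (orderStat (fun i : Fin n => R ω i.castSucc) k)} <
      ENNReal.ofReal (1 - α + 1 / ((n : ℝ) + 1)) := by
  classical
  have hπ := pi_pos
  -- Step B: rewrite the event set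
  have hEB : {ω | ∃ ℓ : ℤ, Y ω (Fin.last n) + 2 * ℓ * π ∈
        predSet (μhat (X ω (Fin.last n))) (σhat (X ω (Fin.last n)))
          (orderStat (fun i : Fin n => R ω i.castSucc) k)} =
      {ω | R ω (Fin.last n) ≤ orderStat (fun i : Fin n => R ω i.castSucc) k} := by
    ext ω
    simp only [Set.mem_setOf_eq]
    rw [mem_pred_iff _ _ _ _ (hμrange _) (hσrange _) (hYrange ω _), ← hRdef]
  rw [hEB]
  -- measurability setup
  set g : ((Fin d → ℝ) × ℝ) → ℝ :=
    fun p => (π - abs (π - |p.2 - μhat p.1|)) / σhat p.1 with hgdef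
  have hg : Measurable g := by
    apply Measurable.div
    · exact (measurable_const.sub
        ((measurable_const.sub ((measurable_snd.sub (hμmeas.comp measurable_fst)).abs)).abs))
    · exact hσmeas.comp measurable_fst
  set Z : Ω → Fin (n + 1) → ((Fin d → ℝ) × ℝ) := fun ω i => (X ω i, Y ω i) with hZdef
  have hZ : Measurable Z :=
    measurable_pi_lambda _ fun i =>
      ((measurable_pi_apply i).comp hX).prodMk ((measurable_pi_apply i).comp hY)
  set G : (Fin (n + 1) → ((Fin d → ℝ) × ℝ)) → (Fin (n + 1) → ℝ) :=
    fun z i => g (z i) with hGdef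
  have hG : Measurable G := measurable_pi_lambda _ fun i => hg.comp (measurable_pi_apply i)
  have hRG : R = G ∘ Z := funext fun ω => funext fun i => hRdef ω i
  have hRmeas : Measurable R := hRG ▸ hG.comp hZ
  -- the symmetric test set S
  set N : (Fin (n + 1) → ℝ) → ℕ :=
    fun f => (univ.filter fun i => f i ≤ f (Fin.last n)).card with hNdef
  have hNmeas : Measurable N := by
    have : N = fun f => ∑ i : Fin (n + 1), if f i ≤ f (Fin.last n) then 1 else 0 :=
      funext fun f => Finset.card_filter _ _
    rw [this]
    exact Finset.measurable_sum _ fun i _ =>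
      Measurable.ite (measurableSet_le (measurable_pi_apply i) (measurable_pi_apply _))
        measurable_const measurable_const
  set S : Set (Fin (n + 1) → ℝ) := N ⁻¹' (Set.Iic ((k : ℕ) + 1)) with hSdef
  have hSmeas : MeasurableSet S := hNmeas measurableSet_Iic
  -- exchangeability of R
  have hmap : ∀ π' : Equiv.Perm (Fin (n + 1)),
      Measure.map (fun ω => fun i => R ω (π' i)) P = Measure.map R P := by
    intro π'
    have h1 : (fun ω => fun i => R ω (π' i)) = G ∘ (fun ω => fun i => Z ω (π' i)) :=
      funext fun ω => funext fun i => hRdef ω (π' i)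
    have h2 : Measurable (fun ω => fun i => Z ω (π' i)) :=
      measurable_pi_lambda _ fun i =>
        ((measurable_pi_apply (π' i)).comp hX).prodMk ((measurable_pi_apply (π' i)).comp hY)
    rw [h1, hRG, ← Measure.map_map hG h2, ← Measure.map_map hG hZ, hexch π']
  -- the rank events
  set D : Fin (n + 1) → Set Ω :=
    fun j => {ω | (univ.filter fun i => R ω i ≤ R ω j).card ≤ (k : ℕ) + 1} with hDdef
  have hDiff : ∀ j, D j = (fun ω => fun i => R ω ((Equiv.swap j (Fin.last n)) i)) ⁻¹' S := by
    intro j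
    ext ω
    simp only [hDdef, Set.mem_setOf_eq, Set.mem_preimage, hSdef, hNdef, Set.mem_Iic,
      Equiv.swap_apply_right]
    exact iff_of_eq (congrArg (fun c => c ≤ (k : ℕ) + 1)
      (card_filter_comp_equiv (Equiv.swap j (Fin.last n)) (fun i => R ω i ≤ R ω j)).symm)
  have hDmeas : ∀ j, MeasurableSet (D j) := by
    intro j
    rw [hDiff j]
    exact (measurable_pi_lambda _ fun i =>
      (measurable_pi_apply _).comp hRmeas) hSmeas
  have hPeq : ∀ j, P (D j) = P (D (Fin.last n)) := by
    intro j
    have hmeasperm : ∀ j' : Fin (n+1), Measurable (fun ω => fun i => R ω ((Equiv.swap j' (Fin.last n)) i)) :=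
      fun j' => measurable_pi_lambda _ fun i => (measurable_pi_apply _).comp hRmeas
    rw [hDiff j, hDiff (Fin.last n),
      ← Measure.map_apply (hmeasperm j) hSmeas,
      ← Measure.map_apply (hmeasperm (Fin.last n)) hSmeas,
      hmap (Equiv.swap j (Fin.last n)), hmap (Equiv.swap (Fin.last n) (Fin.last n))]
  -- sum of the probabilities
  have hksucc : (k : ℕ) + 1 ≤ n + 1 := by omega
  have hsum : ∑ j : Fin (n + 1), P (D j) = ((k : ℕ) + 1 : ℕ) := by
    have hind : ∀ j, P (D j) = ∫⁻ ω, (D j).indicator (fun _ => (1 : ℝ≥0∞)) ω ∂P :=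
      fun j => (lintegral_indicator_one (hDmeas j)).symm
    calc ∑ j : Fin (n + 1), P (D j)
        = ∑ j : Fin (n + 1), ∫⁻ ω, (D j).indicator (fun _ => (1 : ℝ≥0∞)) ω ∂P := by
          exact Finset.sum_congr rfl fun j _ => hind j
      _ = ∫⁻ ω, ∑ j : Fin (n + 1), (D j).indicator (fun _ => (1 : ℝ≥0∞)) ω ∂P :=
          (lintegral_finset_sum _ fun j _ =>
            measurable_const.indicator (hDmeas j)).symm
      _ = ∫⁻ _ω, (((k : ℕ) + 1 : ℕ) : ℝ≥0∞) ∂P := by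
          refine lintegral_congr_ae (hdist.mono fun ω hω => ?_)
          have hcard := rank_count (R ω) hω ((k : ℕ) + 1) hksucc
          calc ∑ j : Fin (n + 1), (D j).indicator (fun _ => (1 : ℝ≥0∞)) ω
              = ∑ j : Fin (n + 1), (if ω ∈ D j then (1 : ℝ≥0∞) else 0) := by
                exact Finset.sum_congr rfl fun j _ => by rw [Set.indicator_apply]
            _ = ((univ.filter fun j : Fin (n + 1) => ω ∈ D j).card : ℝ≥0∞) := by
                rw [Finset.card_filter, Nat.cast_sum]
                exact Finset.sum_congr rfl fun j _ => by split <;> simp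
            _ = (((k : ℕ) + 1 : ℕ) : ℝ≥0∞) := by
                have hc2 : (univ.filter fun j : Fin (n + 1) => ω ∈ D j).card = (k : ℕ) + 1 := by
                  simpa only [hDdef, Set.mem_setOf_eq] using hcard
                rw [hc2]
      _ = (((k : ℕ) + 1 : ℕ) : ℝ≥0∞) := by
          simp [measure_univ]
  have hlastval : P (D (Fin.last n)) = (((k : ℕ) + 1 : ℕ) : ℝ≥0∞) / (((n : ℕ) + 1 : ℕ) : ℝ≥0∞) := by
    have h1 : ∑ j : Fin (n + 1), P (D j) = (n + 1 : ℕ) * P (D (Fin.last n)) := by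
      rw [Finset.sum_congr rfl fun j _ => hPeq j]
      simp [Finset.card_univ, mul_comm]
    rw [h1] at hsum
    rw [ENNReal.eq_div_iff (by simp) (by simp)]
    exact_mod_cast hsum
  -- a.e. identification of the event with D (Fin.last n)
  have hED : P {ω | R ω (Fin.last n) ≤ orderStat (fun i : Fin n => R ω i.castSucc) k}
      = P (D (Fin.last n)) := by
    apply measure_congr
    rw [Filter.eventuallyEq_set]
    refine hdist.mono fun ω hω => ?_
    simp only [Set.mem_setOf_eq, hDdef]
    have hfinj : Function.Injective (fun i : Fin n => R ω i.castSucc) :=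
      fun a b hab => Fin.castSucc_injective n (hω hab)
    have hbridge : (univ.filter fun i : Fin (n + 1) => R ω i ≤ R ω (Fin.last n)).card
        = (univ.filter fun i : Fin n => R ω i.castSucc < R ω (Fin.last n)).card + 1 := by
      rw [Finset.card_filter, Fin.sum_univ_castSucc, if_pos (le_refl _)]
      congr 1
      rw [Finset.card_filter]
      refine Finset.sum_congr rfl fun i _ => ?_
      congr 1
      have hne : R ω i.castSucc ≠ R ω (Fin.last n) :=
        fun h => absurd (hω h) (Fin.castSucc_lt_last i).ne
      exact propext ⟨fun h => lt_of_le_of_ne h hne, le_of_lt⟩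
    rw [le_orderStat_iff _ hfinj, hbridge]
    omega
  rw [hED, hlastval]
  -- numeric conclusion
  have hn1 : (0 : ℝ) < (n : ℝ) + 1 := by positivity
  have hceil : ((k : ℕ) : ℝ) + 1 = ((⌈(1 - α) * ((n : ℝ) + 1)⌉ : ℤ) : ℝ) := by
    exact_mod_cast hk
  have hlow : (1 - α) ≤ (((k : ℕ) : ℝ) + 1) / ((n : ℝ) + 1) := by
    rw [le_div_iff₀ hn1, hceil]
    exact Int.le_ceil _
  have hhigh : (((k : ℕ) : ℝ) + 1) / ((n : ℝ) + 1) < 1 - α + 1 / ((n : ℝ) + 1) := by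
    rw [div_lt_iff₀ hn1, hceil]
    have h2 := Int.ceil_lt_add_one ((1 - α) * ((n : ℝ) + 1))
    have h3 : (1 - α + 1 / ((n : ℝ) + 1)) * ((n : ℝ) + 1) = (1 - α) * ((n : ℝ) + 1) + 1 := by
      field_simp
    rw [h3]
    exact h2
  have h1 : (((k : ℕ) + 1 : ℕ) : ℝ≥0∞) = ENNReal.ofReal (((k : ℕ) : ℝ) + 1) := by
    rw [← ENNReal.ofReal_natCast ((k : ℕ) + 1)]
    norm_num
  have h2 : (((n : ℕ) + 1 : ℕ) : ℝ≥0∞) = ENNReal.ofReal ((n : ℝ) + 1) := by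
    rw [← ENNReal.ofReal_natCast (n + 1)]
    norm_num
  rw [h1, h2, ← ENNReal.ofReal_div_of_pos hn1]
  have hpos : (0 : ℝ) < 1 - α + 1 / ((n : ℝ) + 1) := by
    have := one_div_pos.mpr hn1
    linarith
  constructor
  · exact ENNReal.ofReal_le_ofReal hlow
  · rw [ENNReal.ofReal_lt_ofReal_iff hpos]
    exact hhigh
end
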